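/- Let $q \in L^1(\mathbb{R})$ with $\|q\|_{L^1} < 1$ and $k \in \mathbb{C}^+ \cup \mathbb{R}$ fixed, and $\varphi_-(\cdot;k)$ the unique bounded solution of $\varphi_- = e_1 + K\varphi_-$ for the Volterra operator $K$. Then $\lim_{|k|\to\infty} \varphi_-(x;k) = e_1$ for every $x$, i.e. $\varphi_-^{(2)}(x;k) \to 0$ and $\varphi_-^{(1)}(x;k) \to 1$ as $|k| \to \infty$ in $\overline{\mathbb{C}^+}$. -/

import Mathlib

open MeasureTheory Complex Filter

/-- The Volterra integral operator with complex spectral parameter `k`. -/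
noncomputable def KopC (σ : ℝ) (q : ℝ → ℂ) (k : ℂ) (f : ℝ → ℂ × ℂ) : ℝ → ℂ × ℂ :=
  fun x =>
    (∫ y in Set.Iic x, q y * (f y).2,
     ∫ y in Set.Iic x,
       Complex.exp (2 * Complex.I * k * ((x : ℂ) - y)) *
         (-(σ : ℂ) * (starRingEnd ℂ) (q (-y))) * (f y).1)


lemma lowerSet_measurableSet {S : Set ℝ} (hS : ∀ ⦃a b : ℝ⦄, a ≤ b → b ∈ S → a ∈ S) :
    MeasurableSet S := by
  rcases S.eq_empty_or_nonempty with h | ⟨w, hw⟩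
  · simp [h]
  by_cases hbd : BddAbove S
  · set s := sSup S with hs_def
    have h1 : Set.Iio s ⊆ S := by
      intro z hz
      obtain ⟨w', hw', hz'⟩ := exists_lt_of_lt_csSup ⟨w, hw⟩ hz
      exact hS hz'.le hw'
    have h2 : S ⊆ Set.Iic s := fun z hz => le_csSup hbd hz
    by_cases hs : s ∈ S
    · have : S = Set.Iic s := subset_antisymm h2 (fun z hz => hS hz hs)
      rw [this]; exact measurableSet_Iic
    · have : S = Set.Iio s := by
        apply subset_antisymm _ h1
        intro z hz
        have hzs : z ≤ s := h2 hz
        rcases hzs.lt_or_eq with h | h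
        · exact h
        · exact absurd (h ▸ hz) hs
      rw [this]; exact measurableSet_Iio
  · have : S = Set.univ := by
      ext z; simp only [Set.mem_univ, iff_true]
      obtain ⟨w', hw', hzw⟩ := not_bddAbove_iff.1 hbd z
      exact hS hzw.le hw'
    rw [this]; exact MeasurableSet.univ

lemma aesm_integral_Iic (h : ℝ → ℂ) :
    AEStronglyMeasurable (fun z => ∫ y in Set.Iic z, h y) (volume : Measure ℝ) := by
  set f : ℝ → ℂ := fun z => ∫ y in Set.Iic z, h y with hf_def
  set S : Set ℝ := {z | IntegrableOn h (Set.Iic z) volume} with hS_def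
  have hlower : ∀ ⦃a b : ℝ⦄, a ≤ b → b ∈ S → a ∈ S := fun a b hab hb =>
    hb.mono_set (Set.Iic_subset_Iic.2 hab)
  have hSm : MeasurableSet S := lowerSet_measurableSet hlower
  have hzero : ∀ z ∉ S, f z = 0 := fun z hz => integral_undef hz
  have hind : ∀ z, f z = ∫ y, (Set.Iic z).indicator h y := by
    intro z; rw [integral_indicator measurableSet_Iic]
  have hcont : ContinuousOn f S := by
    intro z hz
    obtain ⟨w, hwS, hzw, hdom⟩ : ∃ w, w ∈ S ∧ z ≤ w ∧ ∀ᶠ z' in nhdsWithin z S, z' ≤ w := by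
      by_cases hex : ∃ w ∈ S, z < w
      · obtain ⟨w, hwS, hzw⟩ := hex
        refine ⟨w, hwS, hzw.le, Filter.Eventually.filter_mono nhdsWithin_le_nhds ?_⟩
        filter_upwards [Iio_mem_nhds hzw] with z' hz' using hz'.le
      · push_neg at hex
        refine ⟨z, hz, le_refl z, eventually_nhdsWithin_of_forall (fun z' hz' => hex z' hz')⟩
    rw [show f = fun z' => ∫ y, (Set.Iic z').indicator h y from funext hind]
    refine tendsto_integral_filter_of_dominated_convergence
      ((Set.Iic w).indicator fun y => ‖h y‖) ?_ ?_ ?_ ?_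
    · filter_upwards [self_mem_nhdsWithin] with z' hz'
      exact (aestronglyMeasurable_indicator_iff measurableSet_Iic).2 (hz' : IntegrableOn h _ _).1
    · filter_upwards [hdom] with z' hz'
      exact Eventually.of_forall
        (fun y => (norm_indicator_le_of_subset (Set.Iic_subset_Iic.2 hz') h y).trans
          (le_of_eq (norm_indicator_eq_indicator_norm h y)))
    · exact (integrable_indicator_iff measurableSet_Iic).2 hwS.norm
    · have : ∀ᵐ y : ℝ, y ≠ z := by
        rw [ae_iff]; simp
      filter_upwards [this] with y hy
      rcases lt_or_gt_of_ne hy with hlt | hgt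
      · have hzy : (Set.Iic z).indicator h y = h y := by
          simp [Set.indicator_of_mem, hlt.le]
        rw [hzy]
        refine Tendsto.congr' ?_ (tendsto_const_nhds (x := h y))
        filter_upwards [Filter.Eventually.filter_mono nhdsWithin_le_nhds
          (Ioi_mem_nhds hlt)] with z' (hz' : y < z')
        simp [Set.indicator_of_mem, hz'.le]
      · have hzy : (Set.Iic z).indicator h y = 0 := by
          simp [Set.indicator_of_notMem, not_le.2 hgt]
        rw [hzy]
        refine Tendsto.congr' ?_ (tendsto_const_nhds (x := (0 : ℂ)))
        filter_upwards [Filter.Eventually.filter_mono nhdsWithin_le_nhds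
          (Iio_mem_nhds hgt)] with z' (hz' : z' < y)
        simp [Set.indicator_of_notMem, not_le.2 hz']
  have feq : f = S.indicator f := by
    ext z; by_cases hz : z ∈ S
    · simp [Set.indicator_of_mem hz]
    · simp [Set.indicator_of_notMem hz, hzero z hz]
  rw [feq]
  exact (aestronglyMeasurable_indicator_iff hSm).2 (hcont.aestronglyMeasurable hSm)


lemma norm_exp_2Ik_le_one {k : ℂ} (him : 0 ≤ k.im) {t : ℝ} (ht : 0 ≤ t) :
    ‖Complex.exp (2 * Complex.I * k * (t : ℂ))‖ ≤ 1 := by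
  rw [Complex.norm_exp, Real.exp_le_one_iff]
  have : (2 * Complex.I * k * (t : ℂ)).re = -2 * k.im * t := by
    simp [Complex.mul_re, Complex.mul_im]
  rw [this]
  nlinarith

lemma interval_bound {k : ℂ} (hk : k ≠ 0) (him : 0 ≤ k.im) (a b x : ℝ) (c : ℂ) :
    ‖∫ y in Set.Iic x, Complex.exp (2 * Complex.I * k * ((x : ℂ) - (y : ℂ))) *
      (Set.Ioc a b).indicator (fun _ => c) y‖ ≤ ‖c‖ / ‖k‖ := by
  set I := Complex.I
  have hstep1 : (fun y : ℝ => Complex.exp (2 * I * k * ((x : ℂ) - (y : ℂ))) *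
      (Set.Ioc a b).indicator (fun _ => c) y) =
      (Set.Ioc a b).indicator (fun y : ℝ =>
        Complex.exp (2 * I * k * ((x : ℂ) - (y : ℂ))) * c) := by
    funext y
    by_cases hy : y ∈ Set.Ioc a b <;> simp [hy]
  rw [hstep1, integral_indicator measurableSet_Ioc, Measure.restrict_restrict measurableSet_Ioc,
    Set.Ioc_inter_Iic]
  set m := b ⊓ x with hm
  by_cases ham : m ≤ a
  · rw [Set.Ioc_eq_empty (not_lt.2 ham)]
    simp [Measure.restrict_empty]
    positivity
  push_neg at ham
  have hmx : m ≤ x := inf_le_right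
  have hax : a ≤ x := ham.le.trans hmx
  rw [← intervalIntegral.integral_of_le ham.le]
  have hexp : ∀ y : ℝ, Complex.exp (2 * I * k * ((x : ℂ) - (y : ℂ))) * c =
      (Complex.exp (2 * I * k * (x : ℂ)) * c) * Complex.exp ((-(2 * I * k)) * (y : ℂ)) := by
    intro y
    rw [show 2 * I * k * ((x : ℂ) - (y : ℂ)) =
      2 * I * k * (x : ℂ) + (-(2 * I * k)) * (y : ℂ) by ring, Complex.exp_add]
    ring
  simp only [hexp]
  have hc2 : (-(2 * I * k)) ≠ 0 := by
    simp [I, Complex.I_ne_zero, hk]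
  rw [intervalIntegral.integral_const_mul, integral_exp_mul_complex hc2]
  have hprod : ∀ u : ℝ, Complex.exp (2 * I * k * (x : ℂ)) * Complex.exp (-(2 * I * k) * (u : ℂ))
      = Complex.exp (2 * I * k * (((x - u : ℝ)) : ℂ)) := by
    intro u
    rw [← Complex.exp_add]
    congr 1
    push_cast
    ring
  have hval : Complex.exp (2 * I * k * (x : ℂ)) * c *
      ((Complex.exp (-(2 * I * k) * (m : ℂ)) - Complex.exp (-(2 * I * k) * (a : ℂ))) / (-(2 * I * k)))
      = c * (Complex.exp (2 * I * k * (((x - m : ℝ)) : ℂ)) -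
          Complex.exp (2 * I * k * (((x - a : ℝ)) : ℂ))) / (-(2 * I * k)) := by
    rw [← hprod m, ← hprod a]
    ring
  rw [hval]
  rw [norm_div, norm_mul]
  have hd : ‖-(2 * I * k)‖ = 2 * ‖k‖ := by
    simp [I]
  rw [hd]
  have hnum : ‖Complex.exp (2 * I * k * (((x - m : ℝ)) : ℂ)) -
      Complex.exp (2 * I * k * (((x - a : ℝ)) : ℂ))‖ ≤ 2 := by
    refine (norm_sub_le _ _).trans ?_
    have h1 := norm_exp_2Ik_le_one him (t := x - m) (by linarith)
    have h2 := norm_exp_2Ik_le_one him (t := x - a) (by linarith)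
    simp only [I] at h1 h2 ⊢
    linarith
  have hkpos : 0 < ‖k‖ := norm_pos_iff.2 hk
  calc ‖c‖ * ‖cexp (2 * I * k * (((x - m : ℝ)) : ℂ)) -
        cexp (2 * I * k * (((x - a : ℝ)) : ℂ))‖ / (2 * ‖k‖)
      ≤ ‖c‖ * 2 / (2 * ‖k‖) := by gcongr
    _ = ‖c‖ / ‖k‖ := by field_simp


lemma norm_exp_factor_le_one {k : ℂ} (him : 0 ≤ k.im) {x y : ℝ} (hyx : y ≤ x) :
    ‖Complex.exp (2 * Complex.I * k * ((x : ℂ) - (y : ℂ)))‖ ≤ 1 := by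
  have : ((x : ℂ) - (y : ℂ)) = (((x - y : ℝ)) : ℂ) := by push_cast; ring
  rw [this]
  exact norm_exp_2Ik_le_one him (by linarith)

lemma cts_cs_bound (ψ : ℝ → ℂ) (hc : Continuous ψ) (hcs : HasCompactSupport ψ)
    {ε : ℝ} (hε : 0 < ε) :
    ∃ K : ℝ, 1 ≤ K ∧ ∀ k : ℂ, K ≤ ‖k‖ → 0 ≤ k.im → ∀ x : ℝ,
      ‖∫ y in Set.Iic x, Complex.exp (2 * Complex.I * k * ((x : ℂ) - (y : ℂ))) * ψ y‖ ≤ ε := by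
  -- support radius
  obtain ⟨r, hr⟩ := hcs.isBounded.subset_closedBall 0
  set R : ℝ := |r| + 1 with hR
  have hRpos : 0 < R := by positivity
  have hsupp : ∀ y : ℝ, y ∉ Set.Ioc (-R) R → ψ y = 0 := by
    intro y hy
    apply image_eq_zero_of_notMem_tsupport
    intro hmem
    have := hr hmem
    rw [Metric.mem_closedBall, Real.dist_eq, sub_zero] at this
    have h1 : |y| ≤ |r| := le_trans this (le_abs_self r)
    rw [abs_le] at h1
    simp only [Set.mem_Ioc, not_and_or, not_lt, not_le] at hy
    rcases hy with h2 | h2 <;> [linarith [h1.1]; linarith [h1.2]]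
  -- bound
  obtain ⟨B, hB⟩ := hc.bounded_above_of_compact_support hcs
  have hB0 : 0 ≤ B := le_trans (norm_nonneg _) (hB 0)
  -- uniform continuity
  have huc : UniformContinuous ψ := hcs.uniformContinuous_of_continuous hc
  set η : ℝ := ε / (2 * (2 * R)) with hη
  have hηpos : 0 < η := by positivity
  obtain ⟨δ, hδpos, hδ⟩ := Metric.uniformContinuous_iff.1 huc η hηpos
  -- grid
  set n : ℕ := ⌈2 * R / δ⌉₊ + 1 with hn
  have hnpos : 0 < (n : ℝ) := by positivity
  have hgrid : 2 * R / n < δ := by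
    rw [div_lt_iff₀ hnpos]
    have h1 : 2 * R / δ < n := by
      calc 2 * R / δ ≤ ⌈2 * R / δ⌉₊ := Nat.le_ceil _
        _ < n := by rw [hn]; push_cast; linarith
    calc 2 * R = (2 * R / δ) * δ := by field_simp
      _ < n * δ := by apply mul_lt_mul_of_pos_right h1 hδpos
      _ = δ * n := by ring
  set h : ℝ := 2 * R / n with hh
  have hhpos : 0 < h := by positivity
  set a : ℕ → ℝ := fun j => -R + j * h with ha
  have han : a n = R := by
    rw [ha]; simp only; rw [hh]; field_simp; ring
  have hamono : ∀ i j : ℕ, i ≤ j → a i ≤ a j := by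
    intro i j hij
    simp only [ha]
    have : (i : ℝ) ≤ j := by exact_mod_cast hij
    nlinarith
  -- step function
  set s : ℝ → ℂ := fun y => ∑ j ∈ Finset.range n,
    (Set.Ioc (a j) (a (j + 1))).indicator (fun _ => ψ (a j)) y with hs
  -- pointwise approximation
  have happrox : ∀ y : ℝ, ‖ψ y - s y‖ ≤ (Set.Icc (-R) R).indicator (fun _ => η) y := by
    intro y
    by_cases hy : y ∈ Set.Ioc (-R) R
    · -- find j
      obtain ⟨hy1, hy2⟩ := hy
      set t : ℝ := (y + R) / h with ht
      have htpos : 0 < t := by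
        rw [ht]; apply div_pos (by linarith) hhpos
      have htn : t ≤ n := by
        rw [ht, div_le_iff₀ hhpos]
        have : (n : ℝ) * h = 2 * R := by rw [hh]; field_simp
        rw [this]; linarith
      set c : ℕ := ⌈t⌉₊ with hc'
      have hc1 : 1 ≤ c := Nat.one_le_ceil_iff.2 htpos
      have hcn : c ≤ n := by
        rw [hc']
        exact Nat.ceil_le.2 htn
      set j : ℕ := c - 1 with hj
      have hjc : j + 1 = c := Nat.succ_pred_eq_of_pos hc1
      have hjn : j < n := by omega
      have hyj1 : a j < y := by
        simp only [ha]
        have hcast : (j : ℝ) < t := by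
          have := Nat.ceil_lt_add_one (le_of_lt htpos)
          have hcj : (c : ℝ) < t + 1 := by exact_mod_cast this
          have hje : (j : ℝ) = (c : ℝ) - 1 := by
            have : (c : ℕ) = j + 1 := hjc.symm
            rw [this]; push_cast; ring
          linarith
        have hmul : (j : ℝ) * h < y + R := by
          have := mul_lt_mul_of_pos_right hcast hhpos
          rw [ht, div_mul_cancel₀ _ (ne_of_gt hhpos)] at this
          exact this
        linarith
      have hyj2 : y ≤ a (j + 1) := by
        simp only [ha]
        have hcast : t ≤ (c : ℝ) := Nat.le_ceil t
        have h2 : y + R ≤ (c : ℝ) * h := by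
          have := mul_le_mul_of_nonneg_right hcast (le_of_lt hhpos)
          rw [ht, div_mul_cancel₀ _ (ne_of_gt hhpos)] at this
          exact this
        have hjcr : ((j : ℝ) + 1) = (c : ℝ) := by exact_mod_cast hjc
        have hmul : ((j : ℝ) + 1) * h = (c : ℝ) * h := by rw [hjcr]
        push_cast
        linarith
      have hsy : s y = ψ (a j) := by
        rw [hs]
        simp only
        rw [Finset.sum_eq_single j]
        · rw [Set.indicator_of_mem (Set.mem_Ioc.2 ⟨hyj1, hyj2⟩)]
        · intro i hi hij
          apply Set.indicator_of_notMem
          intro hmem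
          rcases lt_or_gt_of_ne hij with hlt | hgt
          · have : a (i + 1) ≤ a j := hamono _ _ (by omega)
            exact absurd hmem.2 (by push_neg; linarith [hyj1])
          · have : a (j + 1) ≤ a i := hamono _ _ (by omega)
            exact absurd hmem.1 (by push_neg; linarith [hyj2])
        · intro hj'
          exact absurd (Finset.mem_range.2 hjn) hj'
      have hdist : dist y (a j) < δ := by
        rw [Real.dist_eq, abs_lt]
        have haj1 : a (j+1) = a j + h := by simp only [ha]; push_cast; ring
        rw [haj1] at hyj2
        constructor
        · linarith [hyj1, hδpos]
        · linarith [hyj2, hgrid]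
      have : dist (ψ y) (ψ (a j)) < η := hδ hdist
      rw [Set.indicator_of_mem (Set.mem_Icc.2 ⟨le_of_lt hy1, hy2⟩)]
      rw [hsy]
      rw [← dist_eq_norm]
      exact le_of_lt this
    · have hψy : ψ y = 0 := hsupp y hy
      have hsy : s y = 0 := by
        rw [hs]
        simp only
        apply Finset.sum_eq_zero
        intro i hi
        apply Set.indicator_of_notMem
        intro hmem
        apply hy
        constructor
        · calc -R = a 0 := by simp [ha]
            _ ≤ a i := hamono _ _ (Nat.zero_le _)
            _ < y := hmem.1
        · calc y ≤ a (i + 1) := hmem.2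
            _ ≤ a n := hamono _ _ (Finset.mem_range.1 hi)
            _ = R := han
      rw [hψy, hsy]
      simp only [sub_zero, norm_zero]
      exact Set.indicator_nonneg (fun _ _ => le_of_lt hηpos) y
  -- the analytic estimate
  refine ⟨max 1 (2 * (n * B) / ε), le_max_left _ _, fun k hK him x => ?_⟩
  have hk1 : (1 : ℝ) ≤ ‖k‖ := le_trans (le_max_left _ _) hK
  have hkpos : 0 < ‖k‖ := lt_of_lt_of_le one_pos hk1
  have hk0 : k ≠ 0 := norm_pos_iff.1 hkpos
  set e : ℝ → ℂ := fun y => Complex.exp (2 * Complex.I * k * ((x : ℂ) - (y : ℂ))) with he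
  have hecont : Continuous e :=
    Complex.continuous_exp.comp (continuous_const.mul
      (continuous_const.sub Complex.continuous_ofReal))
  have hint_eψ : IntegrableOn (fun y => e y * ψ y) (Set.Iic x) := by
    apply Integrable.integrableOn
    exact (hecont.mul hc).integrable_of_hasCompactSupport hcs.mul_left
  have hindrw : ∀ (j : ℕ), (fun y : ℝ => e y *
      (Set.Ioc (a j) (a (j + 1))).indicator (fun _ => ψ (a j)) y) =
      (Set.Ioc (a j) (a (j + 1))).indicator (fun y => e y * ψ (a j)) := by
    intro j; funext y
    by_cases hy : y ∈ Set.Ioc (a j) (a (j + 1)) <;> simp [hy]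
  have hint_j : ∀ j : ℕ, IntegrableOn (fun y : ℝ => e y *
      (Set.Ioc (a j) (a (j + 1))).indicator (fun _ => ψ (a j)) y) (Set.Iic x) := by
    intro j
    rw [hindrw j]
    apply Integrable.integrableOn
    rw [integrable_indicator_iff measurableSet_Ioc]
    exact ((hecont.mul continuous_const).integrableOn_Icc).mono_set Set.Ioc_subset_Icc_self
  have hint_es : IntegrableOn (fun y => e y * s y) (Set.Iic x) := by
    have : (fun y => e y * s y) = (fun y => ∑ j ∈ Finset.range n, e y *
        (Set.Ioc (a j) (a (j + 1))).indicator (fun _ => ψ (a j)) y) := by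
      funext y; rw [hs]; simp only; rw [Finset.mul_sum]
    rw [this]
    exact integrable_finset_sum _ (fun j _ => hint_j j)
  have hint_diff : IntegrableOn (fun y => e y * (ψ y - s y)) (Set.Iic x) := by
    apply (hint_eψ.sub hint_es).congr
    filter_upwards with y
    simp only [Pi.sub_apply]
    ring
  have hsplit : (∫ y in Set.Iic x, e y * ψ y) =
      (∫ y in Set.Iic x, e y * (ψ y - s y)) + ∫ y in Set.Iic x, e y * s y := by
    rw [← integral_add hint_diff hint_es]
    apply integral_congr_ae
    filter_upwards with y
    ring
  -- first piece
  have hienorm : ∀ᵐ y ∂(volume.restrict (Set.Iic x)), ‖e y * (ψ y - s y)‖ ≤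
      (Set.Icc (-R) R).indicator (fun _ => η) y := by
    filter_upwards [ae_restrict_mem measurableSet_Iic] with y hy
    rw [norm_mul]
    calc ‖e y‖ * ‖ψ y - s y‖ ≤ 1 * ‖ψ y - s y‖ := by
          apply mul_le_mul_of_nonneg_right _ (norm_nonneg _)
          exact norm_exp_factor_le_one him hy
      _ = ‖ψ y - s y‖ := one_mul _
      _ ≤ _ := happrox y
  have hind_int : Integrable ((Set.Icc (-R) R).indicator (fun _ => η)) volume := by
    rw [integrable_indicator_iff measurableSet_Icc]
    exact integrableOn_const (by rw [Real.volume_Icc]; exact ENNReal.ofReal_ne_top)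
  have hp1 : ‖∫ y in Set.Iic x, e y * (ψ y - s y)‖ ≤ ε / 2 := by
    calc ‖∫ y in Set.Iic x, e y * (ψ y - s y)‖
        ≤ ∫ y in Set.Iic x, (Set.Icc (-R) R).indicator (fun _ => η) y :=
          norm_integral_le_of_norm_le hind_int.integrableOn hienorm
      _ ≤ ∫ y, (Set.Icc (-R) R).indicator (fun _ => η) y :=
          setIntegral_le_integral hind_int
            (Filter.Eventually.of_forall (fun y =>
              Set.indicator_nonneg (fun _ _ => le_of_lt hηpos) y))
      _ = (volume (Set.Icc (-R) R)).toReal • η := integral_indicator_const η measurableSet_Icc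
      _ = (2 * R) * η := by
          rw [Real.volume_Icc, ENNReal.toReal_ofReal (by linarith), smul_eq_mul]
          ring
      _ = ε / 2 := by rw [hη]; field_simp
  -- second piece
  have hp2 : ‖∫ y in Set.Iic x, e y * s y‖ ≤ (n : ℝ) * B / ‖k‖ := by
    have : (∫ y in Set.Iic x, e y * s y) = ∑ j ∈ Finset.range n,
        ∫ y in Set.Iic x, e y * (Set.Ioc (a j) (a (j + 1))).indicator (fun _ => ψ (a j)) y := by
      rw [← integral_finset_sum _ (fun j _ => hint_j j)]
      apply integral_congr_ae
      filter_upwards with y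
      rw [hs]; simp only; rw [Finset.mul_sum]
    rw [this]
    calc ‖∑ j ∈ Finset.range n, ∫ y in Set.Iic x,
          e y * (Set.Ioc (a j) (a (j + 1))).indicator (fun _ => ψ (a j)) y‖
        ≤ ∑ j ∈ Finset.range n, ‖∫ y in Set.Iic x,
          e y * (Set.Ioc (a j) (a (j + 1))).indicator (fun _ => ψ (a j)) y‖ :=
          norm_sum_le _ _
      _ ≤ ∑ j ∈ Finset.range n, B / ‖k‖ := by
          apply Finset.sum_le_sum
          intro j _
          refine le_trans (interval_bound hk0 him (a j) (a (j + 1)) x (ψ (a j))) ?_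
          gcongr
          exact hB _
      _ = (n : ℝ) * B / ‖k‖ := by
          rw [Finset.sum_const, Finset.card_range]
          push_cast; ring
  have hp2' : (n : ℝ) * B / ‖k‖ ≤ ε / 2 := by
    rw [div_le_iff₀ hkpos]
    have h1 : 2 * ((n : ℝ) * B) / ε ≤ ‖k‖ := le_trans (le_max_right _ _) hK
    have h2 : 2 * ((n : ℝ) * B) / ε * ε ≤ ‖k‖ * ε := by
      apply mul_le_mul_of_nonneg_right h1 (le_of_lt hε)
    rw [div_mul_cancel₀ _ (ne_of_gt hε)] at h2
    nlinarith [hnpos, hB0]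
  rw [hsplit]
  calc ‖(∫ y in Set.Iic x, e y * (ψ y - s y)) + ∫ y in Set.Iic x, e y * s y‖
      ≤ ‖∫ y in Set.Iic x, e y * (ψ y - s y)‖ + ‖∫ y in Set.Iic x, e y * s y‖ := norm_add_le _ _
    _ ≤ ε / 2 + ε / 2 := add_le_add hp1 (le_trans hp2 hp2')
    _ = ε := by ring


lemma base_bound (g : ℝ → ℂ) (hg : Integrable g) {ε : ℝ} (hε : 0 < ε) :
    ∃ K : ℝ, ∀ k : ℂ, K ≤ ‖k‖ → 0 ≤ k.im → ∀ x : ℝ,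
      ‖∫ y in Set.Iic x, Complex.exp (2 * Complex.I * k * ((x : ℂ) - (y : ℂ))) * g y‖ ≤ ε := by
  obtain ⟨ψ, hψcs, hψapprox, hψcont, hψint⟩ :=
    hg.exists_hasCompactSupport_integral_sub_le (half_pos hε)
  obtain ⟨K, hK1, hKbound⟩ := cts_cs_bound ψ hψcont hψcs (half_pos hε)
  refine ⟨K, fun k hK him x => ?_⟩
  set e : ℝ → ℂ := fun y => Complex.exp (2 * Complex.I * k * ((x : ℂ) - (y : ℂ))) with he
  have hecont : Continuous e :=
    Complex.continuous_exp.comp (continuous_const.mul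
      (continuous_const.sub Complex.continuous_ofReal))
  have hint_eψ : IntegrableOn (fun y => e y * ψ y) (Set.Iic x) :=
    ((hecont.mul hψcont).integrable_of_hasCompactSupport hψcs.mul_left).integrableOn
  have hdiffint : Integrable (fun y => g y - ψ y) := hg.sub hψint
  have hint_diff : IntegrableOn (fun y => e y * (g y - ψ y)) (Set.Iic x) := by
    apply Integrable.mono' hdiffint.norm.integrableOn
      ((hecont.aestronglyMeasurable.restrict).mul hdiffint.1.restrict)
    filter_upwards [ae_restrict_mem measurableSet_Iic] with y hy
    simp only [Pi.mul_apply]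
    rw [norm_mul]
    calc ‖e y‖ * ‖g y - ψ y‖ ≤ 1 * ‖g y - ψ y‖ :=
          mul_le_mul_of_nonneg_right (norm_exp_factor_le_one him hy) (norm_nonneg _)
      _ = ‖g y - ψ y‖ := one_mul _
  have hsplit : (∫ y in Set.Iic x, e y * g y) =
      (∫ y in Set.Iic x, e y * (g y - ψ y)) + ∫ y in Set.Iic x, e y * ψ y := by
    rw [← integral_add hint_diff hint_eψ]
    apply integral_congr_ae
    filter_upwards with y
    ring
  have hp1 : ‖∫ y in Set.Iic x, e y * (g y - ψ y)‖ ≤ ε / 2 := by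
    calc ‖∫ y in Set.Iic x, e y * (g y - ψ y)‖
        ≤ ∫ y in Set.Iic x, ‖g y - ψ y‖ := by
          apply norm_integral_le_of_norm_le hdiffint.norm.integrableOn
          filter_upwards [ae_restrict_mem measurableSet_Iic] with y hy
          rw [norm_mul]
          calc ‖e y‖ * ‖g y - ψ y‖ ≤ 1 * ‖g y - ψ y‖ :=
                mul_le_mul_of_nonneg_right (norm_exp_factor_le_one him hy) (norm_nonneg _)
            _ = ‖g y - ψ y‖ := one_mul _
      _ ≤ ∫ y, ‖g y - ψ y‖ :=
          setIntegral_le_integral hdiffint.norm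
            (Filter.Eventually.of_forall (fun y => norm_nonneg _))
      _ ≤ ε / 2 := hψapprox
  rw [hsplit]
  calc ‖(∫ y in Set.Iic x, e y * (g y - ψ y)) + ∫ y in Set.Iic x, e y * ψ y‖
      ≤ ‖∫ y in Set.Iic x, e y * (g y - ψ y)‖ + ‖∫ y in Set.Iic x, e y * ψ y‖ := norm_add_le _ _
    _ ≤ ε / 2 + ε / 2 := add_le_add hp1 (hKbound k hK him x)
    _ = ε := by ring


set_option maxHeartbeats 1000000 in
/-- For the bounded Jost solution `φ₋ = e₁ + K φ₋`, one has
`φ₋(x;k) → e₁` as `|k| → ∞` in the closed upper half-plane. -/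
theorem stmt6 (σ : ℝ) (hσ : σ = 1 ∨ σ = -1) (q : ℝ → ℂ) (hq : Integrable q)
    (hq1 : ∫ y : ℝ, ‖q y‖ < 1)
    (φ : ℂ → ℝ → ℂ × ℂ)
    (hbdd : ∃ C : ℝ, ∀ (k : ℂ) (x : ℝ), 0 ≤ k.im →
      ‖(φ k x).1‖ + ‖(φ k x).2‖ ≤ C)
    (heq : ∀ (k : ℂ), 0 ≤ k.im →
      ∀ x : ℝ, φ k x = ((1 : ℂ), (0 : ℂ)) + KopC σ q k (φ k) x)
    (x : ℝ) :
    Tendsto (fun k : ℂ => φ k x)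
      (Filter.comap (fun k : ℂ => ‖k‖) Filter.atTop ⊓ Filter.principal {k : ℂ | 0 ≤ k.im})
      (nhds ((1 : ℂ), (0 : ℂ))) := by
  obtain ⟨C, hC⟩ := hbdd
  have hC1 : ∀ (k : ℂ) (z : ℝ), 0 ≤ k.im → ‖(φ k z).1‖ ≤ C := fun k z h =>
    le_trans (le_add_of_nonneg_right (norm_nonneg _)) (hC k z h)
  have hC2 : ∀ (k : ℂ) (z : ℝ), 0 ≤ k.im → ‖(φ k z).2‖ ≤ C := fun k z h =>
    le_trans (le_add_of_nonneg_left (norm_nonneg _)) (hC k z h)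
  set r : ℝ := ∫ y : ℝ, ‖q y‖ with hrdef
  have hr0 : 0 ≤ r := integral_nonneg (fun y => norm_nonneg _)
  have hr1 : r < 1 := hq1
  set g : ℝ → ℂ := fun y => -(σ : ℂ) * (starRingEnd ℂ) (q (-y)) with hgdef
  have hσ1 : ‖-(σ : ℂ)‖ = 1 := by
    rcases hσ with h | h <;> subst h <;> simp
  have hgnorm : ∀ y, ‖g y‖ = ‖q (-y)‖ := by
    intro y
    rw [hgdef]
    simp only [norm_mul, hσ1, one_mul, RCLike.norm_conj]
  have hqneg : Integrable (fun y => q (-y)) := hq.comp_neg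
  have hgm : AEStronglyMeasurable g volume := by
    apply AEStronglyMeasurable.const_mul
    exact Complex.continuous_conj.comp_aestronglyMeasurable hqneg.1
  have hgint : Integrable g volume := by
    apply Integrable.mono' hqneg.norm hgm
    filter_upwards with y
    rw [hgnorm y]
  have hgr : ∫ y : ℝ, ‖g y‖ = r := by
    rw [hrdef]
    calc ∫ y : ℝ, ‖g y‖ = ∫ y : ℝ, ‖q (-y)‖ := by
          apply integral_congr_ae
          filter_upwards with y
          exact hgnorm y
      _ = ∫ y : ℝ, ‖q y‖ := integral_neg_eq_self (fun y => ‖q y‖) volume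
  rw [Metric.tendsto_nhds]
  intro ε hε
  set ε' : ℝ := ε * (1 - r * r) / 2 with hε'def
  have h1r2 : 0 < 1 - r * r := by nlinarith
  have hε'pos : 0 < ε' := by rw [hε'def]; positivity
  obtain ⟨K, hKbound⟩ := base_bound g hgint hε'pos
  have hev : ∀ᶠ k : ℂ in (Filter.comap (fun k : ℂ => ‖k‖) Filter.atTop ⊓
      Filter.principal {k : ℂ | 0 ≤ k.im}), K ≤ ‖k‖ ∧ 0 ≤ k.im := by
    have h1 : ∀ᶠ k : ℂ in Filter.comap (fun k : ℂ => ‖k‖) Filter.atTop, K ≤ ‖k‖ :=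
      Filter.preimage_mem_comap (Filter.Ici_mem_atTop K)
    have h2 : ∀ᶠ k : ℂ in Filter.principal {k : ℂ | 0 ≤ k.im}, 0 ≤ k.im :=
      Filter.eventually_principal.2 (fun k hk => hk)
    exact (h1.filter_mono inf_le_left).and (h2.filter_mono inf_le_right)
  filter_upwards [hev] with k hk
  obtain ⟨hkK, hkim⟩ := hk
  have heqk := heq k hkim
  have hkbase : ∀ x' : ℝ,
      ‖∫ y in Set.Iic x', Complex.exp (2 * Complex.I * k * ((x' : ℂ) - (y : ℂ))) * g y‖ ≤ ε' :=
    hKbound k hkK hkim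
  -- representations
  set A : ℝ → ℂ := fun z => ∫ y in Set.Iic z, q y * (φ k y).2 with hAdef
  have hrep1 : ∀ z : ℝ, (φ k z).1 = 1 + A z := by
    intro z
    rw [heqk z]
    rfl
  have hrep2 : ∀ z : ℝ, (φ k z).2 =
      ∫ y in Set.Iic z, Complex.exp (2 * Complex.I * k * ((z : ℂ) - (y : ℂ))) * g y *
        (φ k y).1 := by
    intro z
    rw [heqk z]
    show (0 : ℂ) + _ = _
    rw [zero_add]
    rfl
  -- measurability of second component
  have hφ2m : AEStronglyMeasurable (fun z => (φ k z).2) volume := by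
    have hrep2' : ∀ z : ℝ, (φ k z).2 = Complex.exp (2 * Complex.I * k * (z : ℂ)) *
        ∫ y in Set.Iic z, Complex.exp (-(2 * Complex.I * k) * (y : ℂ)) * (g y * (φ k y).1) := by
      intro z
      rw [hrep2 z, ← integral_const_mul]
      apply integral_congr_ae
      filter_upwards with y
      rw [show 2 * Complex.I * k * ((z : ℂ) - (y : ℂ)) =
        2 * Complex.I * k * (z : ℂ) + (-(2 * Complex.I * k)) * (y : ℂ) by ring, Complex.exp_add]
      ring
    rw [show (fun z => (φ k z).2) = _ from funext hrep2']
    exact (Complex.continuous_exp.comp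
      (continuous_const.mul Complex.continuous_ofReal)).aestronglyMeasurable.mul
      (aesm_integral_Iic _)
  have hAm : AEStronglyMeasurable A volume := aesm_integral_Iic _
  have hφ1m : AEStronglyMeasurable (fun z => (φ k z).1) volume := by
    rw [show (fun z => (φ k z).1) = fun z => 1 + A z from funext hrep1]
    exact aestronglyMeasurable_const.add hAm
  -- integrability
  have hqφ2 : Integrable (fun z => q z * (φ k z).2) volume := by
    refine Integrable.mono' (hq.norm.mul_const C) ?_ ?_
    · exact hq.1.mul hφ2m
    filter_upwards with z
    calc ‖q z * (φ k z).2‖ = ‖q z‖ * ‖(φ k z).2‖ := norm_mul _ _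
      _ ≤ ‖q z‖ * C := mul_le_mul_of_nonneg_left (hC2 k z hkim) (norm_nonneg _)
  -- sup
  have hbddM : BddAbove (Set.range fun z : ℝ => ‖(φ k z).2‖) := by
    refine ⟨C, ?_⟩
    rintro _ ⟨z, rfl⟩
    exact hC2 k z hkim
  set M : ℝ := ⨆ z : ℝ, ‖(φ k z).2‖ with hMdef
  have hMle : ∀ z : ℝ, ‖(φ k z).2‖ ≤ M := fun z => le_ciSup hbddM z
  have hM0 : 0 ≤ M := le_trans (norm_nonneg _) (hMle 0)
  have hMC : M ≤ C := ciSup_le (fun z => hC2 k z hkim)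
  -- bound on A
  have hAbound : ∀ z : ℝ, ‖A z‖ ≤ r * M := by
    intro z
    calc ‖A z‖ ≤ ∫ y in Set.Iic z, ‖q y * (φ k y).2‖ := norm_integral_le_integral_norm _
      _ ≤ ∫ y in Set.Iic z, ‖q y‖ * M := by
          apply setIntegral_mono_on hqφ2.norm.integrableOn
            ((hq.norm.mul_const M).integrableOn) measurableSet_Iic
          intro y _
          rw [norm_mul]
          exact mul_le_mul_of_nonneg_left (hMle y) (norm_nonneg _)
      _ ≤ ∫ y : ℝ, ‖q y‖ * M := by
          apply setIntegral_le_integral (hq.norm.mul_const M)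
          filter_upwards with y
          exact mul_nonneg (norm_nonneg _) hM0
      _ = r * M := by rw [integral_mul_const, ← hrdef]
  -- key recursion
  have hkey : ∀ x' : ℝ, ‖(φ k x').2‖ ≤ ε' + r * (r * M) := by
    intro x'
    set e : ℝ → ℂ := fun y => Complex.exp (2 * Complex.I * k * ((x' : ℂ) - (y : ℂ))) with he
    have hecont : Continuous e :=
      Complex.continuous_exp.comp (continuous_const.mul
        (continuous_const.sub Complex.continuous_ofReal))
    have hT1 : IntegrableOn (fun y => e y * g y) (Set.Iic x') := by
      refine Integrable.mono' hgint.norm.integrableOn ?_ ?_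
      · exact (hecont.aestronglyMeasurable.restrict).mul hgm.restrict
      filter_upwards [ae_restrict_mem measurableSet_Iic] with y hy
      calc ‖e y * g y‖ = ‖e y‖ * ‖g y‖ := norm_mul _ _
        _ ≤ 1 * ‖g y‖ :=
            mul_le_mul_of_nonneg_right (norm_exp_factor_le_one hkim hy) (norm_nonneg _)
        _ = ‖g y‖ := one_mul _
    have hT2bound : ∀ᵐ y ∂(volume.restrict (Set.Iic x')),
        ‖e y * g y * A y‖ ≤ ‖g y‖ * (r * M) := by
      filter_upwards [ae_restrict_mem measurableSet_Iic] with y hy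
      calc ‖e y * g y * A y‖ = ‖e y‖ * ‖g y‖ * ‖A y‖ := by rw [norm_mul, norm_mul]
        _ ≤ 1 * ‖g y‖ * (r * M) := by
            apply mul_le_mul _ (hAbound y) (norm_nonneg _) _
            · exact mul_le_mul_of_nonneg_right (norm_exp_factor_le_one hkim hy) (norm_nonneg _)
            · positivity
        _ = ‖g y‖ * (r * M) := by ring
    have hT2 : IntegrableOn (fun y => e y * g y * A y) (Set.Iic x') := by
      refine Integrable.mono' ((hgint.norm.mul_const (r * M)).integrableOn) ?_ hT2bound
      exact ((hecont.aestronglyMeasurable.restrict).mul hgm.restrict).mul hAm.restrict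
    have hsplit : (φ k x').2 = (∫ y in Set.Iic x', e y * g y) +
        ∫ y in Set.Iic x', e y * g y * A y := by
      rw [hrep2 x', ← integral_add hT1 hT2]
      apply integral_congr_ae
      filter_upwards with y
      rw [hrep1 y]
      ring
    rw [hsplit]
    have hp2 : ‖∫ y in Set.Iic x', e y * g y * A y‖ ≤ r * (r * M) := by
      calc ‖∫ y in Set.Iic x', e y * g y * A y‖
          ≤ ∫ y in Set.Iic x', ‖g y‖ * (r * M) :=
            norm_integral_le_of_norm_le ((hgint.norm.mul_const (r * M)).integrableOn) hT2bound
        _ ≤ ∫ y : ℝ, ‖g y‖ * (r * M) := by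
            apply setIntegral_le_integral (hgint.norm.mul_const (r * M))
            filter_upwards with y
            positivity
        _ = r * (r * M) := by rw [integral_mul_const, hgr]
    calc ‖(∫ y in Set.Iic x', e y * g y) + ∫ y in Set.Iic x', e y * g y * A y‖
        ≤ ‖∫ y in Set.Iic x', e y * g y‖ + ‖∫ y in Set.Iic x', e y * g y * A y‖ :=
          norm_add_le _ _
      _ ≤ ε' + r * (r * M) := add_le_add (hkbase x') hp2
  have hMrec : M ≤ ε' + r * r * M := by
    refine ciSup_le (fun z => ?_)
    calc ‖(φ k z).2‖ ≤ ε' + r * (r * M) := hkey z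
      _ = ε' + r * r * M := by ring
  have hMfin : M ≤ ε / 2 := by
    have h2 : M * (1 - r * r) ≤ ε * (1 - r * r) / 2 := by
      have h3 := hMrec
      rw [hε'def] at h3
      nlinarith
    nlinarith
  -- conclude
  have hd1 : dist (φ k x).1 1 ≤ ε / 2 := by
    rw [dist_eq_norm]
    have : (φ k x).1 - 1 = A x := by rw [hrep1 x]; ring
    rw [this]
    calc ‖A x‖ ≤ r * M := hAbound x
      _ ≤ 1 * M := mul_le_mul_of_nonneg_right (le_of_lt hr1) hM0
      _ = M := one_mul M
      _ ≤ ε / 2 := hMfin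
  have hd2 : dist (φ k x).2 0 ≤ ε / 2 := by
    rw [dist_eq_norm, sub_zero]
    exact le_trans (hMle x) hMfin
  calc dist (φ k x) ((1 : ℂ), (0 : ℂ)) = max (dist (φ k x).1 1) (dist (φ k x).2 0) := Prod.dist_eq
    _ ≤ ε / 2 := max_le hd1 hd2
    _ < ε := by linarith
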